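/- For odd n ≥ 3, the Faulhaber polynomials satisfy the differential recurrence n·F_{n-1}(y) = 3·(F_n(y) + (1/2)·y·F_n'(y)), i.e., n·F_{n-1} = 3·θ_{y,1/2} F_n. -/

import Mathlib

open Polynomial

/-- The power-sum polynomial `S n`, satisfying `S n (m) = ∑_{ν<m} ν^n`. -/
noncomputable def S (n : ℕ) : ℚ[X] :=
  C ((n : ℚ) + 1)⁻¹ * (Polynomial.bernoulli (n + 1) - C (_root_.bernoulli (n + 1)))

lemma b2 : _root_.bernoulli 2 = 1/6 := by
  rw [bernoulli_eq_bernoulli'_of_ne_one (by norm_num), bernoulli'_two]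

lemma S1_eq : S 1 = C (1/2 : ℚ) * (X^2 - X) := by
  apply Polynomial.funext; intro x
  simp [S, Polynomial.bernoulli, eval_finset_sum, Finset.sum_range_succ, b2]
  ring

lemma S2_eq : S 2 = C (1/6 : ℚ) * (X * (X - 1) * (2*X - 1)) := by
  apply Polynomial.funext; intro x
  simp [S, Polynomial.bernoulli, eval_finset_sum, Finset.sum_range_succ, b2]
  ring

lemma dS1_eq : derivative (S 1) = C (1/2 : ℚ) * (2*X - 1) := by
  rw [S1_eq]; simp [derivative_mul, map_ofNat]; norm_num

lemma key : 2 * (S 1 * derivative (S 1)) = 3 * S 2 := by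
  apply Polynomial.funext; intro x
  rw [dS1_eq, S1_eq, S2_eq]
  simp
  ring

lemma hd (n : ℕ) (hn : 3 ≤ n) (hodd : Odd n) :
    derivative (S n) = C (n : ℚ) * S (n - 1) := by
  obtain ⟨m, rfl⟩ : ∃ m, n = m + 1 := ⟨n - 1, by omega⟩
  have hb : _root_.bernoulli (m + 1) = 0 := by
    rw [bernoulli_eq_bernoulli'_of_ne_one (by omega)]
    rw [bernoulli'_eq_zero_of_odd hodd (by omega)]
  simp only [S, Nat.add_sub_cancel, derivative_mul, derivative_C, zero_mul, zero_add,
    derivative_sub, derivative_bernoulli_add_one, hb, map_zero, sub_zero]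
  apply Polynomial.funext; intro x
  have h1 : ((m:ℚ) + 1 + 1) ≠ 0 := by positivity
  have h2 : ((m:ℚ) + 1) ≠ 0 := by positivity
  simp
  field_simp

theorem faulhaber_differential_recurrence (n : ℕ) (hn : 3 ≤ n) (hodd : Odd n)
    (F G : ℚ[X])
    (hF : S n = (S 1) ^ 2 * F.comp (S 1))
    (hG : S (n - 1) = S 2 * G.comp (S 1)) :
    C (n : ℚ) * G = C 3 * (F + C (1 / 2 : ℚ) * X * derivative F) := by
  have hD := congrArg derivative hF
  rw [hd n hn hodd, hG, derivative_mul, derivative_pow, derivative_comp] at hD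
  simp only [Nat.cast_ofNat, map_ofNat, pow_one] at hD
  have hS2 : S 2 ≠ 0 := by
    intro h
    have : eval 2 (S 2) ≠ 0 := by rw [S2_eq]; norm_num
    exact this (by rw [h]; simp)
  have hS1c : ¬ (S 1 = C ((S 1).coeff 0)) := by
    intro h
    have h2 : (S 1).coeff 2 = 1/2 := by rw [S1_eq]; simp [coeff_C_mul, coeff_sub, coeff_X]
    rw [h, coeff_C] at h2
    norm_num at h2
  have hmul : S 2 * ((C (n:ℚ) * G - C 3 * (F + C (1/2:ℚ) * X * derivative F)).comp (S 1)) = 0 := by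
    simp only [sub_comp, mul_comp, add_comp, C_comp, X_comp]
    have h3 : (C (3:ℚ) : ℚ[X]) = 3 := map_ofNat C 3
    have hc : (2:ℚ[X]) * C (1/2:ℚ) = 1 := by
      rw [show (2:ℚ[X]) = C 2 from (map_ofNat C 2).symm, ← C_mul]; norm_num
    linear_combination hD
      + (F.comp (S 1) + C (1/2:ℚ) * S 1 * (derivative F).comp (S 1)) * key
      + (-(S 2 * F.comp (S 1)) - S 2 * C (1/2:ℚ) * S 1 * (derivative F).comp (S 1)) * h3
      + (-((S 1)^2 * derivative (S 1) * (derivative F).comp (S 1))) * hc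
  have hz : (C (n:ℚ) * G - C 3 * (F + C (1/2:ℚ) * X * derivative F)).comp (S 1) = 0 :=
    (mul_eq_zero.mp hmul).resolve_left hS2
  rcases comp_eq_zero_iff.mp hz with h | ⟨_, h⟩
  · exact sub_eq_zero.mp h
  · exact absurd h hS1c
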